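/- There exists a commutative semigroup (S,⊕) of cardinality ℵ₁ such that S has no idempotent, S is very weakly cancellative, and every uncountable subset of S is an IP set in S. -/

import Mathlib

/-- Sum of `x` over the finite set `H ⊆ ℕ`, taken in increasing order of indices
(with junk value `x 0` when `H = ∅`). -/
def ordSum {S : Type*} [Add S] (x : ℕ → S) (H : Finset ℕ) : S :=
  match H.sort (· ≤ ·) with
  | [] => x 0
  | h :: t => t.foldl (fun s n => s + x n) (x h)

/-- `FS(⟨x_n⟩) = {∑_{n ∈ H} x_n : H a nonempty finite subset of ℕ}`,
sums in increasing order of indices. -/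
def FS {S : Type*} [Add S] (x : ℕ → S) : Set S :=
  {s | ∃ H : Finset ℕ, H.Nonempty ∧ s = ordSum x H}

/-- `A` is an IP set if `FS(⟨x_n⟩) ⊆ A` for some sequence `⟨x_n⟩` in `S`. -/
def IPSet {S : Type*} [Add S] (A : Set S) : Prop :=
  ∃ x : ℕ → S, FS x ⊆ A

/-- `S` is very weakly cancellative: any union of fewer than `|S|` left solution sets
`{x : a + x = b}`, and any union of fewer than `|S|` right solution sets `{x : x + a = b}`,
has cardinality less than `|S|`. -/
def VeryWeaklyCancellative (S : Type) [Add S] : Prop :=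
  (∀ P : Set (S × S), Cardinal.mk P < Cardinal.mk S →
    Cardinal.mk (⋃ z ∈ P, {x : S | z.1 + x = z.2}) < Cardinal.mk S) ∧
  (∀ P : Set (S × S), Cardinal.mk P < Cardinal.mk S →
    Cardinal.mk (⋃ z ∈ P, {x : S | x + z.1 = z.2}) < Cardinal.mk S)

namespace Stmt5Aux

open Cardinal Set

/-- The underlying well-ordered set of order type `ω₁`. -/
abbrev W : Type := (Cardinal.aleph 1).ord.ToType

/-- Our semigroup carrier. -/
abbrev Sa : Type := W × ℕ

noncomputable instance : Add Sa :=
  ⟨fun a b => if a.1 < b.1 then b else if b.1 < a.1 then a else (a.1, a.2 + b.2 + 1)⟩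

lemma add_def (a b : Sa) :
    a + b = if a.1 < b.1 then b else if b.1 < a.1 then a else (a.1, a.2 + b.2 + 1) := rfl

noncomputable instance instSemi : AddCommSemigroup Sa where
  add_comm a b := by
    simp only [add_def]
    rcases lt_trichotomy a.1 b.1 with h | h | h
    · rw [if_pos h, if_neg (asymm h), if_pos h]
    · rw [if_neg (by rw [h]; exact lt_irrefl _), if_neg (by rw [h]; exact lt_irrefl _),
        if_neg (by rw [h]; exact lt_irrefl _), if_neg (by rw [h]; exact lt_irrefl _)]
      exact Prod.ext h (by omega)
    · rw [if_neg (asymm h), if_pos h, if_neg (asymm h), if_pos h]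
  add_assoc a b c := by
    obtain ⟨α, m⟩ := a; obtain ⟨β, n⟩ := b; obtain ⟨γ, k⟩ := c
    simp only [add_def]
    rcases lt_trichotomy α β with h1 | h1 | h1 <;>
      rcases lt_trichotomy β γ with h2 | h2 | h2 <;>
      subst_vars <;>
      split_ifs <;>
      (try simp_all) <;>
      first
      | omega
      | (exfalso; exact lt_irrefl α (lt_of_lt_of_le (lt_trans ‹α < β› ‹β < γ›) ‹γ ≤ α›))
      | (exfalso; exact lt_irrefl α (lt_trans (lt_trans ‹α < γ› ‹γ < β›) ‹β < α›))
      | (exfalso; exact lt_irrefl γ (lt_of_lt_of_le (lt_trans ‹γ < β› ‹β < α›) ‹α ≤ γ›))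

lemma countable_Iio (w : W) : (Set.Iio w).Countable :=
  (Cardinal.countable_iff_lt_aleph_one _).2 (Cardinal.mk_Iio_ord_toType w)

lemma mk_W : Cardinal.mk W = Cardinal.aleph 1 := Cardinal.mk_ord_toType _

lemma mk_Sa : Cardinal.mk Sa = Cardinal.aleph 1 := by
  have : Cardinal.mk Sa = Cardinal.mk W * Cardinal.mk ℕ := by
    simpa using Cardinal.mk_prod W ℕ
  rw [this, mk_W, Cardinal.mk_nat,
    Cardinal.mul_eq_max (Cardinal.aleph0_le_aleph 1) le_rfl,
    max_eq_left (Cardinal.aleph0_le_aleph 1)]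

lemma sol_countable (a b : Sa) : {x : Sa | a + x = b}.Countable := by
  have hsub : {x : Sa | a + x = b} ⊆
      (Set.Iio a.1 ×ˢ (Set.univ : Set ℕ)) ∪ {b, (a.1, b.2 - a.2 - 1)} := by
    intro x hx
    simp only [Set.mem_setOf_eq, add_def] at hx
    rcases lt_trichotomy a.1 x.1 with h | h | h
    · rw [if_pos h] at hx
      exact Or.inr (Or.inl hx)
    · rw [if_neg (by rw [h]; exact lt_irrefl _), if_neg (by rw [h]; exact lt_irrefl _)] at hx
      refine Or.inr (Or.inr ?_)
      simp only [Set.mem_singleton_iff]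
      have h1 : a.1 = b.1 := by rw [← hx]
      have h2 : a.2 + x.2 + 1 = b.2 := by rw [← hx]
      exact Prod.ext (show x.1 = a.1 from h.symm) (by omega)
    · exact Or.inl ⟨h, trivial⟩
  exact Set.Countable.mono hsub
    (((countable_Iio a.1).prod (Set.countable_univ)).union
      ((Set.countable_singleton _).insert _))

lemma vwc : VeryWeaklyCancellative Sa := by
  have key : ∀ P : Set (Sa × Sa), Cardinal.mk P < Cardinal.mk Sa →
      ∀ f : Sa × Sa → Set Sa, (∀ z, (f z).Countable) →
      Cardinal.mk (⋃ z ∈ P, f z) < Cardinal.mk Sa := by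
    intro P hP f hf
    rw [mk_Sa] at hP ⊢
    rw [← Cardinal.countable_iff_lt_aleph_one] at hP ⊢
    exact hP.biUnion fun z _ => hf z
  constructor
  · exact fun P hP => key P hP _ fun z => sol_countable z.1 z.2
  · refine fun P hP => key P hP _ fun z => ?_
    have : {x : Sa | x + z.1 = z.2} = {x : Sa | z.1 + x = z.2} := by
      ext x; simp [add_comm]
    rw [this]
    exact sol_countable z.1 z.2

lemma foldl_mem {x : ℕ → Sa} (hx : ∀ ⦃m n : ℕ⦄, m < n → (x m).1 < (x n).1) :
    ∀ (l : List ℕ) (a : ℕ), (a :: l).Pairwise (· < ·) →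
      ∃ j, j ∈ a :: l ∧ List.foldl (fun s n => s + x n) (x a) l = x j := by
  intro l
  induction l with
  | nil => exact fun a _ => ⟨a, by simp⟩
  | cons b t ih =>
    intro a hs
    have hab : a < b := (List.pairwise_cons.1 hs).1 b (by simp)
    have hstep : x a + x b = x b := by
      rw [add_def, if_pos (hx hab)]
    have hs' : (b :: t).Pairwise (· < ·) := (List.pairwise_cons.1 hs).2
    obtain ⟨j, hj, hfold⟩ := ih b hs'
    refine ⟨j, by simpa using Or.inr hj, ?_⟩
    simpa [hstep] using hfold

lemma fs_subset_range {x : ℕ → Sa} (hx : ∀ ⦃m n : ℕ⦄, m < n → (x m).1 < (x n).1) :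
    FS x ⊆ Set.range x := by
  rintro s ⟨H, hH, rfl⟩
  unfold ordSum
  rcases hl : H.sort (· ≤ ·) with _ | ⟨h, t⟩
  · exfalso
    have := Finset.length_sort (α := ℕ) (· ≤ ·) (s := H)
    rw [hl] at this
    simp [Finset.card_eq_zero.1 this.symm] at hH
  · have hsorted : (h :: t).Pairwise (· < ·) := by
      rw [← hl]; exact (Finset.sortedLT_sort H).pairwise
    obtain ⟨j, _, hfold⟩ := foldl_mem hx (l := t) h hsorted
    exact ⟨j, hfold.symm⟩

lemma uncountable_ip (A : Set Sa) (hA : ¬A.Countable) : IPSet A := by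
  classical
  set B : Set W := {w | ∃ n : ℕ, (w, n) ∈ A} with hB
  have hBunc : ¬B.Countable := by
    intro hBc
    apply hA
    refine Set.Countable.mono ?_ (hBc.prod (Set.countable_univ (α := ℕ)))
    intro p hp
    exact ⟨⟨p.2, by simpa using hp⟩, trivial⟩
  have hunb : ∀ w : W, ∃ b, b ∈ B ∧ w < b := by
    intro w
    by_contra hcon
    push_neg at hcon
    apply hBunc
    refine Set.Countable.mono ?_ ((countable_Iio w).insert w)
    intro b hb
    rcases lt_or_ge w b with h | h
    · exact absurd h (not_lt.2 (hcon b hb))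
    · rcases eq_or_lt_of_le h with h' | h'
      · exact Or.inl h'
      · exact Or.inr h'
  choose u hu1 hu2 using hunb
  have hW : Nonempty W := Cardinal.mk_ne_zero_iff.1 (by
    rw [mk_W]
    exact (lt_of_lt_of_le Cardinal.aleph0_pos (Cardinal.aleph0_le_aleph 1)).ne')
  obtain ⟨w₀⟩ := hW
  let g : ℕ → W := fun n => Nat.rec (u w₀) (fun _ prev => u prev) n
  have hgB : ∀ n, g n ∈ B := by
    intro n
    cases n with
    | zero => exact hu1 w₀
    | succ k => exact hu1 (g k)
  have hgmono : StrictMono g := strictMono_nat_of_lt_succ fun n => hu2 (g n)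
  let x : ℕ → Sa := fun n => (g n, Classical.choose (hgB n))
  have hxA : ∀ n, x n ∈ A := fun n => Classical.choose_spec (hgB n)
  have hx : ∀ ⦃m n : ℕ⦄, m < n → (x m).1 < (x n).1 := fun m n h => hgmono h
  refine ⟨x, fun s hs => ?_⟩
  obtain ⟨n, rfl⟩ := fs_subset_range hx hs
  exact hxA n

end Stmt5Aux

/-- There is a commutative semigroup of cardinality `ℵ₁` with no idempotent
which is very weakly cancellative and in which every uncountable subset is an IP set. -/
theorem stmt5 :
    ∃ (S : Type) (_ : AddCommSemigroup S),
      Cardinal.mk S = Cardinal.aleph 1 ∧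
      (∀ s : S, s + s ≠ s) ∧
      VeryWeaklyCancellative S ∧
      (∀ A : Set S, ¬A.Countable → IPSet A) := by
  refine ⟨Stmt5Aux.Sa, Stmt5Aux.instSemi, Stmt5Aux.mk_Sa, ?_, Stmt5Aux.vwc,
    Stmt5Aux.uncountable_ip⟩
  intro s hs
  rw [Stmt5Aux.add_def, if_neg (lt_irrefl _), if_neg (lt_irrefl _)] at hs
  have h2 : s.2 + s.2 + 1 = s.2 := (Prod.ext_iff.1 hs).2
  omega
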